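/- For any n×n real matrix A and any permutation σ of [n], the limit determinant of the matrix whose columns are a^{σ(1)},…,a^{σ(n)} equals sgn(σ)·|A|_∞, where |A|_∞ = ⊞_{π∈S_n} sgn(π) Π_i a_{i,π(i)}. Moreover, multiplying one column of A by a scalar α multiplies |A|_∞ by α. -/

import Mathlib

open scoped Classical

/-- ξ_I[x](α): signed count of occurrences of α among the x i, i ∈ I. -/
noncomputable def xiF {ι : Type*} (I : Finset ι) (x : ι → ℝ) (α : ℝ) : ℤ :=
  ((I.filter fun i => x i = α).card : ℤ) - ((I.filter fun i => x i = -α).card : ℤ)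

/-- the n-ary limit operation F_I, i.e. ⊞_{i∈I} x_i. -/
noncomputable def FF {ι : Type*} (I : Finset ι) (x : ι → ℝ) : ℝ :=
  if h : (I.filter fun j => xiF I x (x j) ≠ 0).Nonempty then
    if 0 < xiF I x ((I.filter fun j => xiF I x (x j) ≠ 0).sup' h fun i => |x i|) then
      (I.filter fun j => xiF I x (x j) ≠ 0).sup' h x
    else if xiF I x ((I.filter fun j => xiF I x (x j) ≠ 0).sup' h fun i => |x i|) < 0 then
      (I.filter fun j => xiF I x (x j) ≠ 0).inf' h x
    else 0
  else 0

lemma xiF_comp {ι : Type*} [Fintype ι] (e : Equiv.Perm ι) (x : ι → ℝ) (α : ℝ) :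
    xiF Finset.univ (fun i => x (e i)) α = xiF Finset.univ x α := by
  unfold xiF
  congr 2
  · exact Finset.card_equiv e (by simp)
  · exact Finset.card_equiv e (by simp)

lemma FF_comp {ι : Type*} [Fintype ι] (e : Equiv.Perm ι) (x : ι → ℝ) :
    FF Finset.univ (fun i => x (e i)) = FF Finset.univ x := by
  have hfil : (Finset.univ.filter fun j => xiF Finset.univ (fun i => x (e i)) (x (e j)) ≠ 0)
      = (Finset.univ.filter fun j => xiF Finset.univ x (x j) ≠ 0).map e.symm.toEmbedding := by
    ext a
    simp [Finset.mem_map_equiv, xiF_comp]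
  unfold FF
  rw [hfil]
  by_cases h : (Finset.univ.filter fun j => xiF Finset.univ x (x j) ≠ 0).Nonempty
  · have h' : ((Finset.univ.filter fun j => xiF Finset.univ x (x j) ≠ 0).map
        e.symm.toEmbedding).Nonempty := Finset.map_nonempty.mpr h
    rw [dif_pos h', dif_pos h]
    have hsupabs : ((Finset.univ.filter fun j => xiF Finset.univ x (x j) ≠ 0).map
        e.symm.toEmbedding).sup' h' (fun i => |x (e i)|)
        = (Finset.univ.filter fun j => xiF Finset.univ x (x j) ≠ 0).sup' h (fun i => |x i|) := by
      rw [Finset.sup'_map]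
      simp [Function.comp]
    have hsup : ((Finset.univ.filter fun j => xiF Finset.univ x (x j) ≠ 0).map
        e.symm.toEmbedding).sup' h' (fun i => x (e i))
        = (Finset.univ.filter fun j => xiF Finset.univ x (x j) ≠ 0).sup' h x := by
      rw [Finset.sup'_map]
      simp [Function.comp]
    have hinf : ((Finset.univ.filter fun j => xiF Finset.univ x (x j) ≠ 0).map
        e.symm.toEmbedding).inf' h' (fun i => x (e i))
        = (Finset.univ.filter fun j => xiF Finset.univ x (x j) ≠ 0).inf' h x := by
      rw [Finset.inf'_map]
      simp [Function.comp]
    rw [hsupabs, hsup, hinf, xiF_comp]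
  · rw [dif_neg (by simpa using h), dif_neg h]

lemma sup'_neg' {ι : Type*} (s : Finset ι) (H : s.Nonempty) (x : ι → ℝ) :
    s.sup' H (fun i => -x i) = - s.inf' H x := by
  apply le_antisymm
  · exact Finset.sup'_le _ _ fun i hi => neg_le_neg (Finset.inf'_le _ hi)
  · rw [neg_le]
    exact Finset.le_inf' _ _ fun i hi => by
      rw [neg_le]; exact Finset.le_sup' (fun i => -x i) hi

lemma inf'_neg' {ι : Type*} (s : Finset ι) (H : s.Nonempty) (x : ι → ℝ) :
    s.inf' H (fun i => -x i) = - s.sup' H x := by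
  have h := sup'_neg' s H (fun i => -x i)
  simp only [neg_neg] at h
  have h2 : s.sup' H (fun i => x i) = s.sup' H x := rfl
  linarith

lemma xiF_neg {ι : Type*} (I : Finset ι) (x : ι → ℝ) (α : ℝ) :
    xiF I (fun i => -x i) α = xiF I x (-α) := by
  unfold xiF
  rw [neg_neg]
  have h1 : (I.filter fun i => -x i = α) = (I.filter fun i => x i = -α) := by
    ext i; constructor <;> intro h <;> simp_all <;> linarith
  have h2 : (I.filter fun i => -x i = -α) = (I.filter fun i => x i = α) := by
    ext i; constructor <;> intro h <;> simp_all <;> linarith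
  rw [h1, h2]

lemma xiF_neg_pt {ι : Type*} (I : Finset ι) (x : ι → ℝ) (α : ℝ) :
    xiF I x (-α) = - xiF I x α := by
  unfold xiF
  rw [neg_neg]
  ring

lemma FF_neg {ι : Type*} (I : Finset ι) (x : ι → ℝ) :
    FF I (fun i => -x i) = - FF I x := by
  have hfil : (I.filter fun j => xiF I (fun i => -x i) (-x j) ≠ 0)
      = (I.filter fun j => xiF I x (x j) ≠ 0) := by
    apply Finset.filter_congr
    intro j _
    rw [xiF_neg, neg_neg]
  unfold FF
  rw [hfil]
  by_cases h : (I.filter fun j => xiF I x (x j) ≠ 0).Nonempty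
  · rw [dif_pos h, dif_pos h]
    have habs : ((I.filter fun j => xiF I x (x j) ≠ 0).sup' h fun i => |(-x i)|)
        = ((I.filter fun j => xiF I x (x j) ≠ 0).sup' h fun i => |x i|) := by
      congr 1; funext i; rw [abs_neg]
    rw [habs, xiF_neg, xiF_neg_pt, sup'_neg', inf'_neg']
    split_ifs <;> first | omega | (exfalso; omega) | ring1
  · rw [dif_neg h, dif_neg h]; ring

lemma xiF_mul {ι : Type*} (I : Finset ι) (x : ι → ℝ) {c : ℝ} (hc : c ≠ 0) (α : ℝ) :
    xiF I (fun i => c * x i) (c * α) = xiF I x α := by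
  unfold xiF
  have h1 : (I.filter fun i => c * x i = c * α) = (I.filter fun i => x i = α) := by
    ext i; simp [mul_right_inj' hc]
  have h2 : (I.filter fun i => c * x i = -(c * α)) = (I.filter fun i => x i = -α) := by
    ext i; rw [Finset.mem_filter, Finset.mem_filter, ← mul_neg, mul_right_inj' hc]
  rw [h1, h2]

lemma FF_mul_pos {ι : Type*} (I : Finset ι) (x : ι → ℝ) {c : ℝ} (hc : 0 < c) :
    FF I (fun i => c * x i) = c * FF I x := by
  have hc' : c ≠ 0 := ne_of_gt hc
  have hfil : (I.filter fun j => xiF I (fun i => c * x i) (c * x j) ≠ 0)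
      = (I.filter fun j => xiF I x (x j) ≠ 0) := by
    ext j; rw [Finset.mem_filter, Finset.mem_filter, xiF_mul I x hc']
  unfold FF
  rw [hfil]
  by_cases h : (I.filter fun j => xiF I x (x j) ≠ 0).Nonempty
  · rw [dif_pos h, dif_pos h]
    have habs : ((I.filter fun j => xiF I x (x j) ≠ 0).sup' h fun i => |c * x i|)
        = c * ((I.filter fun j => xiF I x (x j) ≠ 0).sup' h fun i => |x i|) := by
      rw [Finset.comp_sup'_eq_sup'_comp h (fun y => c * y)
        (fun a b => mul_max_of_nonneg a b hc.le)]
      congr 1; funext i; simp [Function.comp, abs_mul, abs_of_pos hc]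
    have hsup : ((I.filter fun j => xiF I x (x j) ≠ 0).sup' h fun i => c * x i)
        = c * (I.filter fun j => xiF I x (x j) ≠ 0).sup' h x := by
      rw [Finset.comp_sup'_eq_sup'_comp h (fun y => c * y)
        (fun a b => mul_max_of_nonneg a b hc.le)]
      rfl
    have hinf : ((I.filter fun j => xiF I x (x j) ≠ 0).inf' h fun i => c * x i)
        = c * (I.filter fun j => xiF I x (x j) ≠ 0).inf' h x := by
      rw [Finset.apply_inf'_eq_inf'_comp h (fun y => c * y)
        (fun a b => mul_min_of_nonneg a b hc.le)]
      rfl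
    rw [habs, xiF_mul I x hc', hsup, hinf]
    split_ifs <;> first | omega | (exfalso; omega) | ring1 | rw [mul_zero]
  · rw [dif_neg h, dif_neg h, mul_zero]

lemma FF_zero {ι : Type*} (I : Finset ι) : FF I (fun _ => (0:ℝ)) = 0 := by
  have hxi : xiF I (fun _ => (0:ℝ)) 0 = 0 := by
    unfold xiF; simp
  have hfil : (I.filter fun j => xiF I (fun _ => (0:ℝ)) 0 ≠ 0) = ∅ := by
    simp [hxi]
  unfold FF
  rw [dif_neg]
  rw [hfil]
  exact Finset.not_nonempty_empty

lemma FF_mul {ι : Type*} (I : Finset ι) (x : ι → ℝ) (c : ℝ) :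
    FF I (fun i => c * x i) = c * FF I x := by
  rcases lt_trichotomy c 0 with hneg | hzero | hpos
  · have hx : (fun i => c * x i) = fun i => -((-c) * x i) := by funext i; ring
    rw [hx, FF_neg, FF_mul_pos I x (by linarith : (0:ℝ) < -c)]
    ring
  · subst hzero
    have hx : (fun i => (0:ℝ) * x i) = fun _ => (0:ℝ) := by funext i; ring
    rw [hx, FF_zero, zero_mul]
  · exact FF_mul_pos I x hpos

/-- determinant in limit -/
noncomputable def detInf {n : ℕ} (A : Matrix (Fin n) (Fin n) ℝ) : ℝ :=
  FF Finset.univ fun σ : Equiv.Perm (Fin n) =>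
    ((Equiv.Perm.sign σ : ℤ) : ℝ) * ∏ i, A i (σ i)

theorem stmt_14 {n : ℕ} (A : Matrix (Fin n) (Fin n) ℝ) (σ : Equiv.Perm (Fin n))
    (α : ℝ) (k : Fin n) :
    detInf (Matrix.of fun i j => A i (σ j)) = ((Equiv.Perm.sign σ : ℤ) : ℝ) * detInf A ∧
    detInf (Matrix.of fun i j => if j = k then α * A i j else A i j) = α * detInf A := by
  constructor
  · unfold detInf
    have hs2 : ((Equiv.Perm.sign σ : ℤ) : ℝ) * ((Equiv.Perm.sign σ : ℤ) : ℝ) = 1 := by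
      rcases Int.units_eq_one_or (Equiv.Perm.sign σ) with h | h <;> rw [h] <;> norm_num
    have key : (fun π : Equiv.Perm (Fin n) =>
        ((Equiv.Perm.sign π : ℤ) : ℝ) * ∏ i, (Matrix.of fun i j => A i (σ j)) i (π i))
        = fun π : Equiv.Perm (Fin n) => ((Equiv.Perm.sign σ : ℤ) : ℝ) *
          ((fun τ : Equiv.Perm (Fin n) => ((Equiv.Perm.sign τ : ℤ) : ℝ) * ∏ i, A i (τ i))
            ((Equiv.mulLeft σ) π)) := by
      funext π
      simp only [Matrix.of_apply, Equiv.coe_mulLeft, Equiv.Perm.mul_apply,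
        Equiv.Perm.sign_mul, Units.val_mul, Int.cast_mul]
      rw [← mul_assoc, ← mul_assoc, hs2, one_mul]
    rw [key, FF_mul]
    congr 1
    exact FF_comp (Equiv.mulLeft σ)
      (fun τ : Equiv.Perm (Fin n) => ((Equiv.Perm.sign τ : ℤ) : ℝ) * ∏ i, A i (τ i))
  · unfold detInf
    have key : (fun π : Equiv.Perm (Fin n) =>
        ((Equiv.Perm.sign π : ℤ) : ℝ) *
          ∏ i, (Matrix.of fun i j => if j = k then α * A i j else A i j) i (π i))
        = fun π : Equiv.Perm (Fin n) => α *
          (((Equiv.Perm.sign π : ℤ) : ℝ) * ∏ i, A i (π i)) := by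
      funext π
      have hprod : (∏ i, (if π i = k then α * A i (π i) else A i (π i)))
          = α * ∏ i, A i (π i) := by
        have hfac : ∀ i : Fin n, (if π i = k then α * A i (π i) else A i (π i))
            = (if i = π.symm k then α else 1) * A i (π i) := by
          intro i
          by_cases hi : π i = k
          · rw [if_pos hi, if_pos (by rw [← hi, Equiv.symm_apply_apply])]
          · rw [if_neg hi, if_neg (fun hh => hi (by rw [hh, Equiv.apply_symm_apply])), one_mul]
        rw [Finset.prod_congr rfl fun i _ => hfac i, Finset.prod_mul_distrib]
        congr 1
        simp
      simp only [Matrix.of_apply]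
      rw [hprod]
      ring
    rw [key, FF_mul]
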